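/- arXiv:1411.4813 — 4 statements merged into one kernel-verified Lean document; each statement's English description precedes it below -/
import Mathlib

section
/- For every arity n ≥ 1, no function F : (Fin n → ZMod (2^32)) → ZMod (2^32) that lies in the clone generated by 32-bit multiplication and three-input addition is a constant function. That is, there is no formula built from multiplication x*y and three-input addition x+y+z that yields a known constant from unknown inputs. -/
/-- The clone of operations on `ZMod (2^32)` of arity `n` generated by
multiplication `x*y` and three-input addition `x+y+z`: the smallest set of
functions containing all coordinate projections and closed under the
corresponding pointwise operations. -/
inductive MulAdd3Clone (n : ℕ) : ((Fin n → ZMod (2^32)) → ZMod (2^32)) → Prop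
  | proj (i : Fin n) : MulAdd3Clone n fun x => x i
  | mul {F G} : MulAdd3Clone n F → MulAdd3Clone n G →
      MulAdd3Clone n fun x => F x * G x
  | add3 {F G H} : MulAdd3Clone n F → MulAdd3Clone n G → MulAdd3Clone n H →
      MulAdd3Clone n fun x => F x + G x + H x

lemma mulAdd3Clone_zero {n : ℕ} {F} (hF : MulAdd3Clone n F) :
    F (fun _ => 0) = 0 := by
  induction hF with
  | proj i => rfl
  | mul _ _ ih1 ih2 => simp [ih1, ih2]
  | add3 _ _ _ ih1 ih2 ih3 => simp [ih1, ih2, ih3]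

lemma mulAdd3Clone_one {n : ℕ} {F} (hF : MulAdd3Clone n F) :
    ZMod.castHom (by norm_num : 2 ∣ 2^32) (ZMod 2) (F (fun _ => 1)) = 1 := by
  induction hF with
  | proj i => exact map_one _
  | mul _ _ ih1 ih2 => rw [map_mul, ih1, ih2, mul_one]
  | add3 _ _ _ ih1 ih2 ih3 =>
      simp only [map_add, ih1, ih2, ih3]; decide

/-- No formula built from 32-bit multiplication and three-input addition
yields a known constant from unknown inputs. -/
theorem stmt0 (n : ℕ) (hn : 1 ≤ n) (F : (Fin n → ZMod (2^32)) → ZMod (2^32))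
    (hF : MulAdd3Clone n F) : ¬ ∃ c : ZMod (2^32), ∀ x, F x = c := by
  rintro ⟨c, hc⟩
  have h0 := mulAdd3Clone_zero hF
  have h1 := mulAdd3Clone_one hF
  rw [hc] at h0 h1
  rw [h0] at h1
  simp at h1
end

section
/- Let f : ZMod (2^32) → ZMod (2^32) → ZMod (2^32) be a binary operation for which there exist odd elements x₁ and y₁ of ZMod (2^32) such that f x₁ y₁ is even. Then there exists a constant function in the unary (arity 1) clone generated by multiplication, three-input addition, and f. -/
/-- The clone of operations of arity `n` on `ZMod (2^32)` generated by
multiplication, three-input addition, and a binary operation `f`. -/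
inductive CloneF (f : ZMod (2^32) → ZMod (2^32) → ZMod (2^32)) (n : ℕ) :
    ((Fin n → ZMod (2^32)) → ZMod (2^32)) → Prop
  | proj (i : Fin n) : CloneF f n fun x => x i
  | mul {F G} : CloneF f n F → CloneF f n G → CloneF f n fun x => F x * G x
  | add3 {F G H} : CloneF f n F → CloneF f n G → CloneF f n H →
      CloneF f n fun x => F x + G x + H x
  | app {F G} : CloneF f n F → CloneF f n G → CloneF f n fun x => f (F x) (G x)

lemma even_pow32' (a : ZMod (2^32)) (h : Even a.val) : a ^ 32 = 0 := by
  obtain ⟨k, hk⟩ := h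
  have ha : ((a.val : ℕ) : ZMod (2^32)) = a := ZMod.natCast_rightInverse a
  have h2a : a = 2 * (k : ZMod (2^32)) := by
    rw [← ha, hk]; push_cast; ring
  rw [h2a, mul_pow]
  have h2 : (2 : ZMod (2^32)) ^ 32 = 0 := by
    have : ((2^32 : ℕ) : ZMod (2^32)) = 0 := ZMod.natCast_self _
    rwa [Nat.cast_pow, Nat.cast_ofNat] at this
  rw [h2, zero_mul]

lemma odd_pow' (a : ZMod (2^32)) (h : Odd a.val) : a ^ (2^31) = 1 := by
  have hu : IsUnit a := by
    rw [← ZMod.natCast_rightInverse a]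
    exact (ZMod.isUnit_iff_coprime _ _).mpr (Nat.Coprime.pow_right _ h.coprime_two_right)
  obtain ⟨u, hu⟩ := hu
  have hpt := ZMod.pow_totient u
  have ht : Nat.totient (2^32) = 2^31 := by
    rw [Nat.totient_prime_pow Nat.prime_two (by norm_num)]; norm_num
  rw [← hu, ← Units.val_pow_eq_pow_val, ← ht, hpt, Units.val_one]

lemma clone_pow2' {f n F} (hF : CloneF f n F) (m : ℕ) :
    CloneF f n fun x => F x ^ (2 ^ m) := by
  induction m with
  | zero => simpa using hF
  | succ m ih =>
      have := CloneF.mul ih ih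
      convert this using 2 with x
      rw [← pow_add]; ring_nf

lemma clone_odd_smul' {f n F} (hF : CloneF f n F) (k : ℕ) :
    CloneF f n fun x => ((2 * k + 1 : ℕ) : ZMod (2^32)) * F x := by
  induction k with
  | zero => simpa using hF
  | succ k ih =>
      have := CloneF.add3 ih hF hF
      convert this using 2 with x
      push_cast
      ring

/-- If `f` maps some pair of odd inputs to an even output, then a constant
function exists in the unary clone generated by multiplication, three-input
addition and `f`. -/
theorem stmt6 (f : ZMod (2^32) → ZMod (2^32) → ZMod (2^32))
    (x₁ y₁ : ZMod (2^32)) (hx₁ : Odd x₁.val) (hy₁ : Odd y₁.val)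
    (hf : ¬ Odd (f x₁ y₁).val) :
    ∃ F : (Fin 1 → ZMod (2^32)) → ZMod (2^32),
      CloneF f 1 F ∧ ∃ c : ZMod (2^32), ∀ x, F x = c := by
  obtain ⟨a, ha⟩ := hx₁
  obtain ⟨b, hb⟩ := hy₁
  refine ⟨fun x => (f (((2 * a + 1 : ℕ) : ZMod (2^32)) * (x 0) ^ (2^31))
      (((2 * b + 1 : ℕ) : ZMod (2^32)) * (x 0) ^ (2^31)) * x 0) ^ (2^5), ?_, 0, ?_⟩
  · exact clone_pow2'
      (CloneF.mul
        (CloneF.app (clone_odd_smul' (clone_pow2' (CloneF.proj 0) 31) a)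
          (clone_odd_smul' (clone_pow2' (CloneF.proj 0) 31) b))
        (CloneF.proj 0)) 5
  · intro x
    have h32 : (2 : ℕ)^5 = 32 := by norm_num
    simp only [h32, mul_pow]
    rcases Nat.even_or_odd (x 0).val with h | h
    · rw [even_pow32' _ h, mul_zero]
    · rw [odd_pow' _ h, mul_one, mul_one]
      have hxx : ((2 * a + 1 : ℕ) : ZMod (2^32)) = x₁ := by
        rw [← ha]; exact ZMod.natCast_rightInverse x₁
      have hyy : ((2 * b + 1 : ℕ) : ZMod (2^32)) = y₁ := by
        rw [← hb]; exact ZMod.natCast_rightInverse y₁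
      rw [hxx, hyy, even_pow32' _ (Nat.not_odd_iff_even.mp hf), zero_mul]
end

section
/- Define 32-bit division div : ZMod (2^32) → ZMod (2^32) → ZMod (2^32) by div x y = the image in ZMod (2^32) of the natural-number quotient (ZMod.val x) / (ZMod.val y) (so that div 0 0 = 0 and div x x = 1 for x ≠ 0). Then div is not safe in conjunction with multiplication and three-input addition: there exist odd inputs with even output (for instance div 1 3 = 0), and consequently there exists a constant function in the unary clone generated by multiplication, three-input addition, and div. -/
/-- 32-bit division: the image in `ZMod (2^32)` of the natural-number quotient
of the representatives. -/
def div32 (x y : ZMod (2^32)) : ZMod (2^32) := ((x.val / y.val : ℕ) : ZMod (2^32))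

lemma val1 : (1 : ZMod (2^32)).val = 1 := by
  haveI : Fact (1 < 2^32) := ⟨by norm_num⟩
  exact ZMod.val_one _

lemma val3 : (3 : ZMod (2^32)).val = 3 := by
  have : (3 : ZMod (2^32)) = ((3 : ℕ) : ZMod (2^32)) := by push_cast; ring
  rw [this, ZMod.val_natCast]
  norm_num

/-- 32-bit division (with `div32 0 0 = 0` and `div32 x x = 1` for `x ≠ 0`) is
not safe: there are odd inputs with even output (e.g. `div32 1 3 = 0`), and
consequently a constant function exists in the unary clone generated by
multiplication, three-input addition and `div32`. -/
theorem stmt10 :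
    (div32 0 0 = 0 ∧ ∀ x : ZMod (2^32), x ≠ 0 → div32 x x = 1) ∧
    (div32 1 3 = 0 ∧
      Odd (ZMod.val (1 : ZMod (2^32))) ∧ Odd (ZMod.val (3 : ZMod (2^32))) ∧
      ∃ x y : ZMod (2^32), Odd x.val ∧ Odd y.val ∧ ¬ Odd (div32 x y).val) ∧
    ∃ F : (Fin 1 → ZMod (2^32)) → ZMod (2^32),
      CloneF div32 1 F ∧ ∃ c : ZMod (2^32), ∀ x, F x = c := by
  have h00 : div32 0 0 = 0 := by simp [div32]
  have hxx : ∀ x : ZMod (2^32), x ≠ 0 → div32 x x = 1 := by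
    intro x hx
    have hv : x.val ≠ 0 := by
      simpa [ZMod.val_eq_zero] using hx
    simp [div32, Nat.div_self (Nat.pos_of_ne_zero hv)]
  have h13 : div32 1 3 = 0 := by
    simp [div32, val1, val3]
  refine ⟨⟨h00, hxx⟩, ⟨h13, ⟨0, by rw [val1]; norm_num⟩, ⟨1, by rw [val3]; norm_num⟩,
    1, 3, ⟨0, by rw [val1]; norm_num⟩, ⟨1, by rw [val3]; norm_num⟩, by
      simp [h13, ZMod.val_zero]⟩, ?_⟩
  refine ⟨fun x => div32 (div32 (x 0) (x 0))
      (div32 (x 0) (x 0) + div32 (x 0) (x 0) + div32 (x 0) (x 0)),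
    ?_, 0, ?_⟩
  · exact CloneF.app (CloneF.app (CloneF.proj 0) (CloneF.proj 0))
      (CloneF.add3 (CloneF.app (CloneF.proj 0) (CloneF.proj 0))
        (CloneF.app (CloneF.proj 0) (CloneF.proj 0))
        (CloneF.app (CloneF.proj 0) (CloneF.proj 0)))
  · intro x
    by_cases h : x 0 = 0
    · simp [h, h00]
    · simp only [hxx _ h]
      have : (1 : ZMod (2^32)) + 1 + 1 = 3 := by ring
      rw [this, h13]
end

section
/- Let f be a binary operation on ZMod (2^32) and suppose there is an odd-preserving function p : ZMod (2^32) → ZMod (2^32) belonging to the unary clone generated by multiplication and three-input addition, together with an odd element x₁ of ZMod (2^32), such that f (p x₁) (p x₁) is even. Then there exists a constant function in the unary clone generated by multiplication, three-input addition, and f. -/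
/-- Even elements of `ZMod (2^32)` raised to the power `2^32` vanish. -/
lemma stmt15_evenPow (y : ZMod (2^32)) (h : ¬ Odd y.val) : y ^ (4294967296 : ℕ) = 0 := by
  rw [Nat.not_odd_iff_even] at h
  obtain ⟨k, hk⟩ := h
  have hy : y = 2 * (k : ZMod (2^32)) := by
    have h1 : ((y.val : ℕ) : ZMod (2^32)) = y := by simp [ZMod.natCast_val, ZMod.cast_id]
    rw [← h1, hk]; push_cast; ring
  have h2 : (2 : ZMod (2^32)) ^ 32 = 0 := by
    have := ZMod.natCast_self (2^32)
    push_cast at this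
    exact this
  have h3 : (4294967296 : ℕ) = 32 * 134217728 := by norm_num
  rw [h3, pow_mul, hy, mul_pow, h2, zero_mul, zero_pow]
  norm_num

/-- Odd elements of `ZMod (2^32)` raised to the power `2^32` give `1`. -/
lemma stmt15_oddPow (y : ZMod (2^32)) (h : Odd y.val) : y ^ (4294967296 : ℕ) = 1 := by
  have hc : Nat.Coprime y.val (2^32) :=
    Nat.Coprime.pow_right _ (Nat.coprime_two_right.mpr h)
  set u := ZMod.unitOfCoprime y.val hc with hu
  have huv : (u : ZMod (2^32)) = y := by
    simp [hu, ZMod.coe_unitOfCoprime, ZMod.natCast_val, ZMod.cast_id]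
  have ht := ZMod.pow_totient u
  have htot : Nat.totient (2^32) = 2147483648 := by
    rw [Nat.totient_prime_pow Nat.prime_two (by norm_num)]
    norm_num
  rw [htot] at ht
  have hu2 : u ^ (4294967296 : ℕ) = 1 := by
    have h3 : (4294967296 : ℕ) = 2147483648 * 2 := by norm_num
    rw [h3, pow_mul, ht, one_pow]
  calc y ^ (4294967296:ℕ) = ((u ^ (4294967296:ℕ) : (ZMod (2^32))ˣ) : ZMod (2^32)) := by
        rw [Units.val_pow_eq_pow_val, huv]
    _ = 1 := by rw [hu2]; rfl

lemma stmt15_clone_pow2 {f} {F} (h : CloneF f 1 F) (k : ℕ) :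
    CloneF f 1 (fun x => F x ^ (2^k : ℕ)) := by
  induction k with
  | zero => simpa using h
  | succ k ih =>
      have h2 : (fun x => F x ^ (2^(k+1) : ℕ)) =
          (fun x => F x ^ (2^k : ℕ) * F x ^ (2^k : ℕ)) := by
        funext x
        rw [← pow_add]
        congr 1
        omega
      rw [h2]
      exact ih.mul ih

lemma stmt15_clone_powN {f} {F} (h : CloneF f 1 F) :
    CloneF f 1 (fun x => F x ^ (4294967296 : ℕ)) := by
  have h32 := stmt15_clone_pow2 h 32
  have he : (fun x => F x ^ (2^32 : ℕ)) = (fun x => F x ^ (4294967296 : ℕ)) := by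
    funext x; norm_num
  rwa [he] at h32

lemma stmt15_clone_oddmul {f} {F} (h : CloneF f 1 F) (m : ℕ) :
    CloneF f 1 (fun x => ((2*m+1 : ℕ) : ZMod (2^32)) * F x) := by
  induction m with
  | zero => simpa using h
  | succ m ih =>
      have h2 : (fun x => ((2*(m+1)+1 : ℕ) : ZMod (2^32)) * F x) =
          (fun x => ((2*m+1 : ℕ) : ZMod (2^32)) * F x + F x + F x) := by
        funext x; push_cast; ring
      rw [h2]
      exact ih.add3 h h

lemma stmt15_clone_comp {f} {P S} (hP : MulAdd3Clone 1 P) (hS : CloneF f 1 S) :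
    CloneF f 1 (fun x => P (fun _ => S x)) := by
  induction hP with
  | proj i => exact hS
  | mul _ _ ih1 ih2 => exact ih1.mul ih2
  | add3 _ _ _ ih1 ih2 ih3 => exact ih1.add3 ih2 ih3

/-- If some odd-preserving unary function `p` in the clone generated by
multiplication and three-input addition (identified with an arity-1 clone
member `P` via `p x = P (fun _ => x)`) and some odd `x₁` satisfy that
`f (p x₁) (p x₁)` is even, then a constant function exists in the unary clone
generated by multiplication, three-input addition and `f`. -/
theorem stmt15 (f : ZMod (2^32) → ZMod (2^32) → ZMod (2^32))
    (P : (Fin 1 → ZMod (2^32)) → ZMod (2^32)) (hP : MulAdd3Clone 1 P)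
    (hodd : ∀ x : ZMod (2^32), Odd x.val → Odd (P (fun _ => x)).val)
    (x₁ : ZMod (2^32)) (hx₁ : Odd x₁.val)
    (heven : ¬ Odd (f (P (fun _ => x₁)) (P (fun _ => x₁))).val) :
    ∃ F : (Fin 1 → ZMod (2^32)) → ZMod (2^32),
      CloneF f 1 F ∧ ∃ c : ZMod (2^32), ∀ x, F x = c := by
  obtain ⟨m, hm⟩ := hx₁
  -- the inner term `S x = x₁.val * (x 0)^(2^32)`, equal to `x₁` on odd inputs
  have hS : CloneF f 1 (fun x => ((2*m+1 : ℕ) : ZMod (2^32)) * (x 0) ^ (4294967296 : ℕ)) :=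
    stmt15_clone_oddmul (stmt15_clone_powN (.proj 0)) m
  have hT : CloneF f 1 (fun x => P (fun _ =>
      ((2*m+1 : ℕ) : ZMod (2^32)) * (x 0) ^ (4294967296 : ℕ))) :=
    stmt15_clone_comp hP hS
  have hcast : ((2*m+1 : ℕ) : ZMod (2^32)) = x₁ := by
    rw [← hm]
    simp [ZMod.natCast_val, ZMod.cast_id]
  refine ⟨_, ((stmt15_clone_powN (.proj 0)).mul (stmt15_clone_powN (hT.app hT))), 0, ?_⟩
  intro x
  by_cases h : Odd (x 0).val
  · have h1 := stmt15_oddPow (x 0) h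
    rw [h1, one_mul, mul_one, hcast, stmt15_evenPow _ heven]
  · rw [stmt15_evenPow (x 0) h, zero_mul]
end
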